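/- Let A be a finite totally ordered alphabet with |A| ≥ 2, z ∈ A, and suppose t, s, t¹, s¹ are infinite words over A with t = Ψ_z(t¹), s = Ψ_z(s¹), and z occurring in t¹. Let a be the minimal letter of A. Then min(t¹) = a·s¹ if and only if min(t) = a·s. -/

import Mathlib

/-- The prefix of length `k` of an infinite word `w : ℕ → A`. -/
def pref {A : Type*} (w : ℕ → A) (k : ℕ) : List A := (List.range k).map w

/-- `u` is a (finite) factor of the infinite word `w`. -/
def IsFactor {A : Type*} (w : ℕ → A) (u : List A) : Prop :=
  ∃ i : ℕ, u = (List.range u.length).map (fun j => w (i + j))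

/-- Prepend a letter to an infinite word. -/
def consW {A : Type*} (a : A) (s : ℕ → A) : ℕ → A := fun n => match n with
  | 0 => a
  | n + 1 => s n

/-- Concatenation of a finite word with an infinite word. -/
def catW {A : Type*} (u : List A) (w : ℕ → A) : ℕ → A := fun n =>
  if h : n < u.length then u.get ⟨n, h⟩ else w (n - u.length)

/-- `u` is the lexicographically smallest factor of `w` of length `k`,
w.r.t. the strict order `lt` on letters. -/
def IsMinFactor {A : Type*} (lt : A → A → Prop) (w : ℕ → A) (k : ℕ) (u : List A) : Prop :=
  IsFactor w u ∧ u.length = k ∧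
    ∀ v, IsFactor w v → v.length = k → u = v ∨ List.Lex lt u v

/-- `u` is the lexicographically greatest factor of `w` of length `k`. -/
def IsMaxFactor {A : Type*} (lt : A → A → Prop) (w : ℕ → A) (k : ℕ) (u : List A) : Prop :=
  IsFactor w u ∧ u.length = k ∧
    ∀ v, IsFactor w v → v.length = k → u = v ∨ List.Lex lt v u

/-- `m = min(w)`: every length-`k` prefix of `m` is the lexicographically
smallest factor of `w` of length `k`. -/
def IsMinWord {A : Type*} (lt : A → A → Prop) (w m : ℕ → A) : Prop :=
  ∀ k : ℕ, IsMinFactor lt w k (pref m k)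

/-- `m = max(w)`. -/
def IsMaxWord {A : Type*} (lt : A → A → Prop) (w m : ℕ → A) : Prop :=
  ∀ k : ℕ, IsMaxFactor lt w k (pref m k)

/-- The letter `z` is separating for `t`: every length-2 factor of `t` contains `z`. -/
def Separating {A : Type*} (z : A) (t : ℕ → A) : Prop :=
  ∀ u, IsFactor t u → u.length = 2 → z ∈ u

/-- The episturmian morphism `Ψ_z` on finite words: `z ↦ z`, `x ↦ zx` for `x ≠ z`. -/
def psiL {A : Type*} [DecidableEq A] (z : A) (u : List A) : List A :=
  u.flatMap (fun x => if x = z then [z] else [z, x])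

/-- `t = Ψ_z(y)` for infinite words: the `Ψ_z`-image of every prefix of `y`
is a prefix of `t`. -/
def PsiImage {A : Type*} [DecidableEq A] (z : A) (y t : ℕ → A) : Prop :=
  ∀ n : ℕ, psiL z (pref y n) = pref t (psiL z (pref y n)).length

/-- `u` is a left special factor of `w`. -/
def LeftSpecial {A : Type*} (w : ℕ → A) (u : List A) : Prop :=
  ∃ a b : A, a ≠ b ∧ IsFactor w (a :: u) ∧ IsFactor w (b :: u)

/-- `u` is a right special factor of `w`. -/
def RightSpecial {A : Type*} (w : ℕ → A) (u : List A) : Prop :=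
  ∃ a b : A, a ≠ b ∧ IsFactor w (u ++ [a]) ∧ IsFactor w (u ++ [b])

/-- `w` is a standard episturmian word: factors closed under reversal and
every left special factor is a prefix. -/
def StdEpisturmian {A : Type*} (w : ℕ → A) : Prop :=
  (∀ u, IsFactor w u → IsFactor w u.reverse) ∧
  (∀ u, LeftSpecial w u → u = pref w u.length)

/-- `w` is an `A`-strict standard episturmian word (standard Arnoux-Rauzy sequence):
standard episturmian and every prefix has every letter as a left extension. -/
def StrictStdEpisturmian {A : Type*} (w : ℕ → A) : Prop :=
  StdEpisturmian w ∧ ∀ (n : ℕ) (a : A), IsFactor w (a :: pref w n)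

/-- `w` is episturmian: factors closed under reversal and at most one right
special factor of each length. -/
def Episturmian {A : Type*} (w : ℕ → A) : Prop :=
  (∀ u, IsFactor w u → IsFactor w u.reverse) ∧
  (∀ u v, RightSpecial w u → RightSpecial w v → u.length = v.length → u = v)

/-- `w` is an `A`-strict episturmian word: it has the same set of factors as some
`A`-strict standard episturmian word. -/
def StrictEpisturmian {A : Type*} (w : ℕ → A) : Prop :=
  ∃ s : ℕ → A, StrictStdEpisturmian s ∧ ∀ u, IsFactor w u ↔ IsFactor s u

/-- `t` is fine: there is an infinite word `s` such that for every total order on the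
alphabet and every letter `a` minimal for that order, `min(t) = a·s`. -/
def Fine {A : Type*} (t : ℕ → A) : Prop :=
  ∃ s : ℕ → A, ∀ (l : LinearOrder A) (a : A), (∀ b, l.le a b) →
    IsMinWord l.lt t (consW a s)

namespace S5
variable {A : Type*}

def shiftW (w : ℕ → A) (i : ℕ) : ℕ → A := fun j => w (i + j)

@[simp] lemma shiftW_zero (w : ℕ → A) : shiftW w 0 = w := funext fun j => by simp [shiftW]

lemma shiftW_shiftW (w : ℕ → A) (i j : ℕ) : shiftW (shiftW w i) j = shiftW w (i + j) :=
  funext fun n => by simp [shiftW, Nat.add_assoc]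

@[simp] lemma pref_length (w : ℕ → A) (k : ℕ) : (pref w k).length = k := by
  simp [pref]

@[simp] lemma pref_zero (w : ℕ → A) : pref w 0 = [] := rfl

lemma pref_succ (w : ℕ → A) (k : ℕ) : pref w (k + 1) = pref w k ++ [w k] := by
  simp [pref, List.range_succ]

lemma pref_cons (w : ℕ → A) (k : ℕ) : pref w (k + 1) = w 0 :: pref (shiftW w 1) k := by
  simp [pref, List.range_succ_eq_map, List.map_map]
  intro p _; simp [shiftW, Nat.add_comm]

lemma pref_add (w : ℕ → A) (m n : ℕ) :
    pref w (m + n) = pref w m ++ pref (shiftW w m) n := by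
  simp [pref, List.range_add, List.map_map]
  intro p _; rfl

lemma pref_getElem (w : ℕ → A) {p k : ℕ} (h : p < k) :
    (pref w k)[p]'(by simpa using h) = w p := by
  simp [pref]

lemma pref_getElem? (w : ℕ → A) {p k : ℕ} (h : p < k) :
    (pref w k)[p]? = some (w p) := by
  simp [pref, h]

lemma pref_eq_iff {w w' : ℕ → A} {k : ℕ} :
    pref w k = pref w' k ↔ ∀ p < k, w p = w' p := by
  constructor
  · intro h p hp
    have := congrArg (fun l => l[p]?) h
    simpa [pref, hp] using this
  · intro h
    simp only [pref, List.map_inj_left]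
    intro p hp
    exact h p (List.mem_range.mp hp)

lemma pref_take (w : ℕ → A) {m n : ℕ} (h : m ≤ n) : (pref w n).take m = pref w m := by
  obtain ⟨d, rfl⟩ := Nat.le.dest h
  rw [pref_add, List.take_append_of_le_length (by simp), List.take_of_length_le (by simp)]

lemma isFactor_iff {w : ℕ → A} {u : List A} :
    IsFactor w u ↔ ∃ i, u = pref (shiftW w i) u.length := Iff.rfl

lemma isFactor_pref_shift (w : ℕ → A) (i k : ℕ) : IsFactor w (pref (shiftW w i) k) :=
  ⟨i, by rw [pref_length]; rfl⟩

lemma pref_consW (a : A) (s : ℕ → A) (k : ℕ) :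
    pref (consW a s) (k + 1) = a :: pref s k := by
  simp [pref, consW, List.range_succ_eq_map, List.map_map]


lemma lex_append_rel {r : A → A → Prop} {a b : A} (h : r a b) :
    ∀ (u : List A) (v v' : List A), List.Lex r (u ++ a :: v) (u ++ b :: v')
  | [], v, v' => List.Lex.rel h
  | c :: u, v, v' => List.Lex.cons (lex_append_rel h u v v')

lemma lex_asymm [LinearOrder A] : ∀ {u v : List A},
    List.Lex (· < ·) u v → List.Lex (· < ·) v u → False := by
  intro u v h1
  induction h1 with
  | nil => intro h2; cases h2
  | @cons a as bs _ ih =>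
    intro h2
    cases h2 with
    | rel h' => exact lt_irrefl a h'
    | cons h' => exact ih h'
  | @rel a as b bs h =>
    intro h2
    cases h2 with
    | rel h' => exact absurd h' (lt_asymm h)
    | cons h' => exact lt_irrefl a h

lemma lex_cons_iff [LinearOrder A] {a : A} {u v : List A} :
    List.Lex (· < ·) (a :: u) (a :: v) ↔ List.Lex (· < ·) u v := by
  constructor
  · intro h
    cases h with
    | rel h' => exact absurd h' (lt_irrefl a)
    | cons h' => exact h'
  · exact List.Lex.cons

lemma lexle_cons [LinearOrder A] {a : A} {u v : List A}
    (h : a :: u = a :: v ∨ List.Lex (· < ·) (a :: u) (a :: v)) :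
    u = v ∨ List.Lex (· < ·) u v := by
  rcases h with h | h
  · exact Or.inl (by injection h)
  · exact Or.inr (lex_cons_iff.mp h)

/-- if `x,x'` agree below `d` and `x d < x' d` then prefixes of length `K > d` are lex-<. -/
lemma lex_pref_of_lt [LinearOrder A] {x x' : ℕ → A} {d K : ℕ}
    (hagree : ∀ q < d, x q = x' q) (hlt : x d < x' d) (hK : d < K) :
    List.Lex (· < ·) (pref x K) (pref x' K) := by
  obtain ⟨m, rfl⟩ : ∃ m, K = d + (m + 1) := ⟨K - (d+1), by omega⟩
  rw [pref_add x d, pref_add x' d, pref_cons, pref_cons]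
  have h1 : pref x d = pref x' d := pref_eq_iff.mpr hagree
  rw [h1]
  exact lex_append_rel hlt _ _ _

section Psi
variable [DecidableEq A] {z : A}

lemma psiL_append (z : A) (u v : List A) : psiL z (u ++ v) = psiL z u ++ psiL z v := by
  simp [psiL]

lemma psiL_singleton (z x : A) : psiL z [x] = if x = z then [z] else [z, x] := by
  simp [psiL]

/-- length of the image of the prefix of length `n`. -/
def psF (z : A) (y : ℕ → A) (n : ℕ) : ℕ := (psiL z (pref y n)).length

@[simp] lemma psF_zero (y : ℕ → A) : psF z y 0 = 0 := by simp [psF, psiL]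

lemma psF_succ (y : ℕ → A) (n : ℕ) :
    psF z y (n + 1) = psF z y n + (if y n = z then 1 else 2) := by
  simp only [psF, pref_succ, psiL_append, List.length_append, psiL_singleton]
  split <;> simp

lemma psF_le (y : ℕ → A) (n : ℕ) : psF z y n ≤ 2 * n := by
  induction n with
  | zero => simp
  | succ n ih => rw [psF_succ]; split <;> omega

lemma le_psF (y : ℕ → A) (n : ℕ) : n ≤ psF z y n := by
  induction n with
  | zero => simp
  | succ n ih => rw [psF_succ]; split <;> omega

lemma psF_lt_succ (y : ℕ → A) (n : ℕ) : psF z y n < psF z y (n + 1) := by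
  rw [psF_succ]; split <;> omega

lemma psF_congr {y y' : ℕ → A} {n : ℕ} (h : pref y n = pref y' n) :
    psF z y n = psF z y' n := by
  simp [psF, h]

variable {y w : ℕ → A}

lemma pref_psF (hw : PsiImage z y w) (n : ℕ) :
    pref w (psF z y n) = psiL z (pref y n) := (hw n).symm

lemma psiL_pref_succ (z : A) (y : ℕ → A) (n : ℕ) :
    psiL z (pref y (n + 1)) = psiL z (pref y n) ++ (if y n = z then [z] else [z, y n]) := by
  rw [pref_succ, psiL_append, psiL_singleton]

lemma w_psF (hw : PsiImage z y w) (n : ℕ) : w (psF z y n) = z := by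
  have h := pref_psF hw (n + 1)
  have hlt : psF z y n < psF z y (n + 1) := psF_lt_succ y n
  have h2 := pref_getElem? w hlt
  rw [h, psiL_pref_succ, List.getElem?_append_right (by simp [psF])] at h2
  simp only [psF, Nat.sub_self] at h2
  split at h2 <;> simpa [psF] using h2.symm

lemma w_psF_succ (hw : PsiImage z y w) (n : ℕ) : w (psF z y n + 1) = y n := by
  by_cases hz : y n = z
  · have h : psF z y (n + 1) = psF z y n + 1 := by rw [psF_succ, if_pos hz]
    rw [← h, w_psF hw, hz]
  · have hlt : psF z y n + 1 < psF z y (n + 1) := by rw [psF_succ, if_neg hz]; omega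
    have h := pref_getElem? w hlt
    rw [pref_psF hw (n+1), psiL_pref_succ, if_neg hz,
      List.getElem?_append_right (by simp [psF])] at h
    simp only [psF] at h
    simpa [psF] using h.symm

lemma psiImage_shift (hw : PsiImage z y w) (n : ℕ) :
    PsiImage z (shiftW y n) (shiftW w (psF z y n)) := by
  intro m
  have hsplit : pref y (n + m) = pref y n ++ pref (shiftW y n) m := pref_add y n m
  have h1 : psiL z (pref y (n + m)) = psiL z (pref y n) ++ psiL z (pref (shiftW y n) m) := by
    rw [hsplit, psiL_append]
  set L := (psiL z (pref (shiftW y n) m)).length with hL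
  have hps : psF z y (n + m) = psF z y n + L := by
    simp [psF, h1, hL]
  have h2 := pref_psF hw (n + m)
  rw [hps, pref_add, h1, pref_psF hw n] at h2
  exact (List.append_cancel_left h2.symm)

lemma psF_cover (y : ℕ → A) (z : A) (p : ℕ) : ∃ n, psF z y n ≤ p ∧ p < psF z y (n + 1) := by
  induction p with
  | zero => exact ⟨0, by simp, by simpa using psF_lt_succ (z := z) y 0⟩
  | succ p ih =>
    obtain ⟨n, h1, h2⟩ := ih
    by_cases h : p + 1 < psF z y (n + 1)
    · exact ⟨n, by omega, h⟩
    · refine ⟨n + 1, by omega, ?_⟩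
      have := psF_lt_succ (z := z) y (n + 1)
      omega

lemma pos_class (hw : PsiImage z y w) (p : ℕ) :
    ∃ n, p = psF z y n ∨ (p = psF z y n + 1 ∧ y n ≠ z) := by
  obtain ⟨n, h1, h2⟩ := psF_cover y z p
  rw [psF_succ] at h2
  refine ⟨n, ?_⟩
  by_cases hz : y n = z
  · rw [if_pos hz] at h2; left; omega
  · rw [if_neg hz] at h2
    rcases Nat.lt_or_ge p (psF z y n + 1) with h | h
    · left; omega
    · right; exact ⟨by omega, hz⟩

end Psi

section Psi2
variable [DecidableEq A] {z : A} {y y' w w' : ℕ → A}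

/-- pointwise agreement transfer through the morphism. -/
lemma w_congr (hw : PsiImage z y w) (hw' : PsiImage z y' w') {n : ℕ}
    (hy : ∀ q < n, y q = y' q) : ∀ p ≤ psF z y n, w p = w' p := by
  have hpref : pref y n = pref y' n := pref_eq_iff.mpr hy
  have hps : psF z y n = psF z y' n := psF_congr hpref
  have hw1 : pref w (psF z y n) = pref w' (psF z y n) := by
    rw [pref_psF hw n, hpref, hps, pref_psF hw' n]
  intro p hp
  rcases Nat.lt_or_ge p (psF z y n) with h | h
  · have a1 := pref_getElem? w (k := psF z y n) h
    have a2 := pref_getElem? w' (k := psF z y n) h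
    rw [hw1, a2] at a1
    exact (Option.some.inj a1).symm
  · have hpe : p = psF z y n := by omega
    rw [hpe, w_psF hw n, hps, w_psF hw' n]

/-- injectivity: agreement of images on `2k+1` letters forces agreement on `k` letters. -/
lemma decode (hw : PsiImage z y w) (hw' : PsiImage z y' w') {k : ℕ}
    (h : ∀ p < 2 * k + 1, w p = w' p) : pref y k = pref y' k := by
  have main : ∀ j ≤ k, psF z y j = psF z y' j ∧ ∀ q < j, y q = y' q := by
    intro j
    induction j with
    | zero => intro _; simp
    | succ j ih =>
      intro hj
      obtain ⟨hps, hq⟩ := ih (by omega)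
      have hle : psF z y j + 1 < 2 * k + 1 := by
        have := psF_le (z := z) y j
        omega
      have hyj : y j = y' j := by
        rw [← w_psF_succ hw j, ← w_psF_succ hw' j, ← hps, h _ hle]
      constructor
      · rw [psF_succ, psF_succ, hps, hyj]
      · intro q hq'
        rcases Nat.lt_or_ge q j with h' | h'
        · exact hq q h'
        · have : q = j := by omega
          rw [this]; exact hyj
  exact pref_eq_iff.mpr (main k le_rfl).2

end Psi2

section Psi3
variable [LinearOrder A] {z : A} {y y' w w' : ℕ → A}

/-- strict order preservation at the first difference. -/
lemma lex_strict (hw : PsiImage z y w) (hw' : PsiImage z y' w') {d : ℕ}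
    (hagree : ∀ q < d, y q = y' q) (hlt : y d < y' d) {K : ℕ}
    (hK : psF z y d + 2 ≤ K) :
    List.Lex (· < ·) (pref w K) (pref w' K) := by
  have hps : psF z y d = psF z y' d := psF_congr (pref_eq_iff.mpr hagree)
  have h1 : ∀ p ≤ psF z y d, w p = w' p := w_congr hw hw' hagree
  refine lex_pref_of_lt (d := psF z y d + 1) ?_ ?_ (by omega)
  · intro q hq; exact h1 q (by omega)
  · rw [w_psF_succ hw d, hps, w_psF_succ hw' d]
    exact hlt

/-- non-strict order preservation. -/
lemma lexle (hw : PsiImage z y w) (hw' : PsiImage z y' w')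
    (h : ∀ j, pref y j = pref y' j ∨ List.Lex (· < ·) (pref y j) (pref y' j)) (K : ℕ) :
    pref w K = pref w' K ∨ List.Lex (· < ·) (pref w K) (pref w' K) := by
  by_cases h0 : ∀ q, y q = y' q
  · left
    refine pref_eq_iff.mpr fun p hp => ?_
    have hle : p ≤ psF z y (p + 1) := le_trans (by omega) (le_psF y (p+1))
    exact w_congr hw hw' (fun q _ => h0 q) p hle
  · push_neg at h0
    have hex : ∃ d, y d ≠ y' d := h0
    classical
    obtain ⟨d, hd, hagree⟩ : ∃ d, y d ≠ y' d ∧ ∀ q < d, y q = y' q :=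
      ⟨Nat.find hex, Nat.find_spec hex, fun q hq => not_not.mp (Nat.find_min hex hq)⟩
    have hlt : y d < y' d := by
      rcases lt_or_gt_of_ne hd with h' | h'
      · exact h'
      · exfalso
        have hlex : List.Lex (· < ·) (pref y' (d+1)) (pref y (d+1)) := by
          rw [pref_succ, pref_succ, pref_eq_iff.mpr hagree]
          exact lex_append_rel (show y' d < y d from h') _ _ _
        rcases h (d + 1) with he | hl
        · rw [he] at hlex
          exact lex_asymm hlex hlex
        · exact lex_asymm hl hlex
    rcases Nat.lt_or_ge K (psF z y d + 2) with hK | hK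
    · left
      refine pref_eq_iff.mpr fun p hp => ?_
      exact w_congr hw hw' hagree p (by omega)
    · right
      exact lex_strict hw hw' hagree hlt hK

lemma psiImage_consW {s1 s : ℕ → A} (hs : PsiImage z s1 s) :
    PsiImage z (consW z s1) (consW z s) := by
  intro n
  cases n with
  | zero => simp [pref, psiL]
  | succ n =>
    have h2 : psiL z (pref (consW z s1) (n + 1)) = z :: psiL z (pref s1 n) := by
      rw [pref_consW]; simp [psiL]
    rw [h2, List.length_cons, pref_consW, ← hs n]

end Psi3

section Main
variable [LinearOrder A] {z a : A} {t t1 s s1 : ℕ → A}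

@[simp] lemma shiftW_app (w : ℕ → A) (i j : ℕ) : shiftW w i j = w (i + j) := rfl

lemma shiftW_zero_app (w : ℕ → A) (i : ℕ) : shiftW w i 0 = w i := by simp

lemma isMinFactor_zero (lt : A → A → Prop) (w m : ℕ → A) : IsMinFactor lt w 0 (pref m 0) := by
  refine ⟨⟨0, by simp⟩, by simp, ?_⟩
  intro v _ hv
  left
  rw [pref_zero, (List.length_eq_zero_iff).mp hv]

lemma factor_occ {w : ℕ → A} {u : List A} {K : ℕ} (h : IsFactor w u) (hK : u.length = K) :
    ∃ i, u = pref (shiftW w i) K := by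
  subst hK
  exact h

lemma min_le_shift {lt : A → A → Prop} {w m : ℕ → A} (hmin : IsMinWord lt w m) (i k : ℕ) :
    pref m k = pref (shiftW w i) k ∨ List.Lex lt (pref m k) (pref (shiftW w i) k) :=
  (hmin k).2.2 _ (isFactor_pref_shift w i k) (pref_length _ _)

lemma forward_z (ht : PsiImage z t1 t) (hs : PsiImage z s1 s) (ha : ∀ b, z ≤ b)
    (hmin : IsMinWord (· < ·) t1 (consW z s1)) : IsMinWord (· < ·) t (consW z s) := by
  have hms : PsiImage z (consW z s1) (consW z s) := psiImage_consW hs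
  intro K
  match K with
  | 0 => exact isMinFactor_zero _ _ _
  | k + 1 =>
    refine ⟨?_, pref_length _ _, ?_⟩
    · obtain ⟨i, hi⟩ := factor_occ (hmin (k+1)).1 (pref_length _ _)
      have himg := psiImage_shift ht i
      have hcong := w_congr himg hms (n := k+1) (fun q hq => (pref_eq_iff.mp hi q hq).symm)
      have hpe : pref (consW z s) (k+1) = pref (shiftW t (psF z t1 i)) (k+1) :=
        (pref_eq_iff.mpr fun p hp =>
          hcong p (le_trans (Nat.le_of_lt hp) (le_psF _ _))).symm
      rw [hpe]
      exact isFactor_pref_shift _ _ _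
    · intro v hv hvlen
      obtain ⟨p, hp⟩ := factor_occ hv hvlen
      obtain ⟨i, hcase⟩ := pos_class ht p
      rcases hcase with rfl | ⟨rfl, hne⟩
      · have himg := psiImage_shift ht i
        have hle := lexle hms himg (fun j => min_le_shift hmin i j) (k+1)
        rw [hp]
        exact hle
      · rw [hp, pref_consW, pref_cons]
        right
        apply List.Lex.rel
        show z < shiftW t (psF z t1 i + 1) 0
        rw [shiftW_zero_app, w_psF_succ ht i]
        exact lt_of_le_of_ne (ha _) (Ne.symm hne)

lemma backward_z (ht : PsiImage z t1 t) (hs : PsiImage z s1 s) (ha : ∀ b, z ≤ b)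
    (hmin : IsMinWord (· < ·) t (consW z s)) : IsMinWord (· < ·) t1 (consW z s1) := by
  have hms : PsiImage z (consW z s1) (consW z s) := psiImage_consW hs
  intro K
  match K with
  | 0 => exact isMinFactor_zero _ _ _
  | k + 1 =>
    refine ⟨?_, pref_length _ _, ?_⟩
    · obtain ⟨p, hp⟩ := factor_occ (hmin (2*k+3)).1 (pref_length _ _)
      have hfirst : t p = z := by
        have h0 := pref_eq_iff.mp hp 0 (by omega)
        simpa [consW] using h0.symm
      obtain ⟨i, hcase⟩ := pos_class ht p
      rcases hcase with rfl | ⟨rfl, hne⟩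
      · have himg := psiImage_shift ht i
        have hdec := decode hms himg (k := k+1)
          (fun q hq => pref_eq_iff.mp hp q (by omega))
        rw [hdec]
        exact isFactor_pref_shift _ _ _
      · exact absurd (by rw [← w_psF_succ ht i]; exact hfirst) hne
    · intro v hv hvlen
      obtain ⟨i, hi⟩ := factor_occ hv hvlen
      by_cases h0 : ∀ q < k + 1, consW z s1 q = shiftW t1 i q
      · left
        rw [hi]
        exact pref_eq_iff.mpr h0
      · push_neg at h0
        obtain ⟨q0, hq0, hq0ne⟩ := h0
        have hex : ∃ d, consW z s1 d ≠ shiftW t1 i d := ⟨q0, hq0ne⟩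
        classical
        obtain ⟨d, hd, hagree, hdk⟩ : ∃ d, consW z s1 d ≠ shiftW t1 i d ∧
            (∀ q < d, consW z s1 q = shiftW t1 i q) ∧ d < k + 1 :=
          ⟨Nat.find hex, Nat.find_spec hex, fun q hq => not_not.mp (Nat.find_min hex hq),
            lt_of_le_of_lt (Nat.find_le hq0ne) hq0⟩
        rcases lt_trichotomy (consW z s1 d) (shiftW t1 i d) with hlt | heq | hgt
        · right
          rw [hi]
          exact lex_pref_of_lt hagree hlt hdk
        · exact absurd heq hd
        · exfalso
          have himg := psiImage_shift ht i
          have hstrict := lex_strict himg hms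
            (fun q hq => (hagree q hq).symm) hgt
            (K := 2*k+4) (by have := psF_le (z := z) (shiftW t1 i) d; omega)
          rcases min_le_shift hmin (psF z t1 i) (2*k+4) with he | hl
          · rw [he] at hstrict
            exact lex_asymm hstrict hstrict
          · exact lex_asymm hl hstrict


lemma forward_ne (haz : a ≠ z) (ha : ∀ b, a ≤ b) (ht : PsiImage z t1 t) (hs : PsiImage z s1 s)
    (hmin : IsMinWord (· < ·) t1 (consW a s1)) : IsMinWord (· < ·) t (consW a s) := by
  intro K
  match K with
  | 0 => exact isMinFactor_zero _ _ _
  | k + 1 =>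
    refine ⟨?_, pref_length _ _, ?_⟩
    · obtain ⟨i, hi⟩ := factor_occ (hmin (k+1)).1 (pref_length _ _)
      rw [pref_consW, pref_cons, shiftW_shiftW] at hi
      injection hi with hh htail
      have hia : t1 i = a := by rw [hh]; simp
      have hne : t1 i ≠ z := by rw [hia]; exact haz
      have himg := psiImage_shift ht (i+1)
      have hcong := w_congr hs himg (n := k) (pref_eq_iff.mp htail)
      have hsk : pref s k = pref (shiftW t (psF z t1 (i+1))) k :=
        pref_eq_iff.mpr fun p hp => hcong p (le_trans (Nat.le_of_lt hp) (le_psF _ _))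
      have hpsF : psF z t1 (i+1) = psF z t1 i + 1 + 1 := by rw [psF_succ, if_neg hne]
      have hkey : pref (consW a s) (k+1) = pref (shiftW t (psF z t1 i + 1)) (k+1) := by
        rw [pref_consW, pref_cons, shiftW_shiftW, shiftW_zero_app, w_psF_succ ht i, hia,
          ← hpsF, hsk]
      rw [hkey]
      exact isFactor_pref_shift _ _ _
    · intro v hv hvlen
      obtain ⟨p, hp⟩ := factor_occ hv hvlen
      rw [hp, pref_consW, pref_cons]
      by_cases hpa : t p = a
      · obtain ⟨i, hcase⟩ := pos_class ht p
        rcases hcase with rfl | ⟨rfl, hne⟩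
        · exact absurd (hpa.symm.trans (w_psF ht i)) haz
        · have hia : t1 i = a := by rw [← w_psF_succ ht i]; exact hpa
          have hstrip : ∀ j, pref s1 j = pref (shiftW t1 (i+1)) j ∨
              List.Lex (· < ·) (pref s1 j) (pref (shiftW t1 (i+1)) j) := by
            intro j
            have h1 := min_le_shift hmin i (j+1)
            rw [pref_consW, pref_cons, shiftW_shiftW, shiftW_zero_app, hia] at h1
            exact lexle_cons h1
          have hle := lexle hs (psiImage_shift ht (i+1)) hstrip k
          have hpsF : psF z t1 (i+1) = psF z t1 i + 1 + 1 := by rw [psF_succ, if_neg hne]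
          rw [shiftW_shiftW, shiftW_zero_app, w_psF_succ ht i, hia, ← hpsF]
          rcases hle with he | hl
          · left; rw [he]
          · right; exact List.Lex.cons hl
      · right
        apply List.Lex.rel
        show a < shiftW t p 0
        rw [shiftW_zero_app]
        exact lt_of_le_of_ne (ha _) (Ne.symm hpa)

lemma backward_ne (haz : a ≠ z) (ha : ∀ b, a ≤ b) (ht : PsiImage z t1 t) (hs : PsiImage z s1 s)
    (hmin : IsMinWord (· < ·) t (consW a s)) : IsMinWord (· < ·) t1 (consW a s1) := by
  intro K
  match K with
  | 0 => exact isMinFactor_zero _ _ _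
  | k + 1 =>
    refine ⟨?_, pref_length _ _, ?_⟩
    · obtain ⟨p, hp⟩ := factor_occ (hmin (2*k+1+1)).1 (pref_length _ _)
      rw [pref_consW a s (2*k+1), pref_cons (shiftW t p) (2*k+1), shiftW_shiftW] at hp
      injection hp with hh htail
      have hpa : t p = a := by rw [hh]; simp
      obtain ⟨i, hcase⟩ := pos_class ht p
      rcases hcase with rfl | ⟨rfl, hne⟩
      · exact absurd (hpa.symm.trans (w_psF ht i)) haz
      · have hia : t1 i = a := by rw [← w_psF_succ ht i]; exact hpa
        have hpsF : psF z t1 (i+1) = psF z t1 i + 1 + 1 := by rw [psF_succ, if_neg hne]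
        rw [← hpsF] at htail
        have himg := psiImage_shift ht (i+1)
        have hdec := decode hs himg (k := k) (fun q hq => pref_eq_iff.mp htail q hq)
        have hkey : pref (consW a s1) (k+1) = pref (shiftW t1 i) (k+1) := by
          rw [pref_consW, pref_cons, shiftW_shiftW, shiftW_zero_app, hia, hdec]
        rw [hkey]
        exact isFactor_pref_shift _ _ _
    · intro v hv hvlen
      obtain ⟨i, hi⟩ := factor_occ hv hvlen
      rw [hi, pref_consW, pref_cons, shiftW_shiftW]
      by_cases hia : t1 i = a
      · rw [shiftW_zero_app, hia]
        by_cases h0 : ∀ q < k, s1 q = shiftW t1 (i+1) q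
        · left; rw [pref_eq_iff.mpr h0]
        · push_neg at h0
          obtain ⟨q0, hq0, hq0ne⟩ := h0
          have hex : ∃ d, s1 d ≠ shiftW t1 (i+1) d := ⟨q0, hq0ne⟩
          classical
          obtain ⟨d, hd, hagree, hdk⟩ : ∃ d, s1 d ≠ shiftW t1 (i+1) d ∧
              (∀ q < d, s1 q = shiftW t1 (i+1) q) ∧ d < k :=
            ⟨Nat.find hex, Nat.find_spec hex, fun q hq => not_not.mp (Nat.find_min hex hq),
              lt_of_le_of_lt (Nat.find_le hq0ne) hq0⟩
          rcases lt_trichotomy (s1 d) (shiftW t1 (i+1) d) with hlt | heq | hgt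
          · right; exact List.Lex.cons (lex_pref_of_lt hagree hlt hdk)
          · exact absurd heq hd
          · exfalso
            have hne : t1 i ≠ z := by rw [hia]; exact haz
            have hpsF : psF z t1 (i+1) = psF z t1 i + 1 + 1 := by rw [psF_succ, if_neg hne]
            have himg := psiImage_shift ht (i+1)
            have hstrict := lex_strict himg hs (fun q hq => (hagree q hq).symm) hgt
              (K := 2*k+2) (by have := psF_le (z := z) (shiftW t1 (i+1)) d; omega)
            have h2 := min_le_shift hmin (psF z t1 i + 1) (2*k+2+1)
            rw [pref_consW a s (2*k+2), pref_cons (shiftW t (psF z t1 i + 1)) (2*k+2),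
              shiftW_shiftW, shiftW_zero_app, w_psF_succ ht i, hia, ← hpsF] at h2
            rcases lexle_cons h2 with he | hl
            · rw [← he] at hstrict
              exact lex_asymm hstrict hstrict
            · exact lex_asymm hl hstrict
      · right
        apply List.Lex.rel
        show a < shiftW t1 i 0
        rw [shiftW_zero_app]
        exact lt_of_le_of_ne (ha _) (Ne.symm hia)

end Main

end S5


/-- Key Lemma: with `t = Ψ_z(t¹)`, `s = Ψ_z(s¹)`, `z` occurring in `t¹`, and `a` the
minimal letter: `min(t¹) = a·s¹` iff `min(t) = a·s`. -/
theorem stmt_5 {A : Type*} [LinearOrder A] [Fintype A] (hcard : 2 ≤ Fintype.card A)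
    (z a : A) (ha : ∀ b : A, a ≤ b) (t t1 s s1 : ℕ → A)
    (ht : PsiImage z t1 t) (hs : PsiImage z s1 s) (hz : ∃ i : ℕ, t1 i = z) :
    IsMinWord (· < ·) t1 (consW a s1) ↔ IsMinWord (· < ·) t (consW a s) := by
  by_cases haz : a = z
  · subst haz
    exact ⟨S5.forward_z ht hs ha, S5.backward_z ht hs ha⟩
  · exact ⟨S5.forward_ne haz ha ht hs, S5.backward_ne haz ha ht hs⟩
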